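/- Let n ≥ 3 and let I = ⟨s,t,f⟩ and J = ⟨s',t',g⟩ be nontrivial linear identities of length 2n that are distinct, i.e., (s,t,f) ≠ (s',t',g) and (s,t,f) ≠ (t',s',g⁻¹). Then I implies J if and only if s = t, s' = s, t' = s, and g = f^k for some integer k ≥ 1. -/

import Mathlib

/-- Bracketings: full binary trees in which every internal node has two children. -/
inductive Brack : Type
  | leaf : Brack
  | node : Brack → Brack → Brack

/-- Number of leaves of a bracketing. -/
def Brack.leaves : Brack → ℕ
  | .leaf => 1
  | .node l r => l.leaves + r.leaves

/-- The `s`-product in a magma `G`: evaluate the bracketing `s`, labelling its leaves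
from left to right by `a k, a (k+1), …`. -/
def Brack.eval {G : Type*} [Mul G] : Brack → (ℕ → G) → ℕ → G
  | .leaf, a, k => a k
  | .node l r, a, k => l.eval a k * r.eval a (k + l.leaves)

/-- Extend a permutation of `{0, …, n−1}` to `ℕ` (identity elsewhere). -/
def permNat {n : ℕ} (f : Equiv.Perm (Fin n)) (i : ℕ) : ℕ :=
  if h : i < n then (f ⟨i, h⟩ : ℕ) else i

/-- A magma `G` satisfies the linear identity `⟨s, t, f⟩` if for all `a₁, …, aₙ ∈ G`
the `s`-product of `(a₁, …, aₙ)` equals the `t`-product of `(a_{f(1)}, …, a_{f(n)})`. -/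
def Satisfies (G : Type*) [Mul G] {n : ℕ} (s t : Brack) (f : Equiv.Perm (Fin n)) : Prop :=
  ∀ a : ℕ → G, s.eval a 0 = t.eval (fun i => a (permNat f i)) 0

/-- A magma `G` is `m`AC-nice if any two products of the same `m` elements coincide:
for every `a`, all bracketings `s, t` with `m` leaves and all permutations `f, g`,
the `s`-product of `(a_{f(1)}, …, a_{f(m)})` equals the `t`-product of
`(a_{g(1)}, …, a_{g(m)})`. -/
def ACnice (G : Type*) [Mul G] (m : ℕ) : Prop :=
  ∀ (a : ℕ → G) (s t : Brack), s.leaves = m → t.leaves = m →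
    ∀ f g : Equiv.Perm (Fin m),
      s.eval (fun i => a (permNat f i)) 0 = t.eval (fun i => a (permNat g i)) 0

namespace Stmt4Aux

abbrev FM := FreeMagma ℕ

lemma permNat_lt {n : ℕ} (f : Equiv.Perm (Fin n)) {i : ℕ} (h : i < n) : permNat f i < n := by
  simp only [permNat, dif_pos h]; exact (f ⟨i, h⟩).isLt

lemma permNat_mul {n : ℕ} (φ ψ : Equiv.Perm (Fin n)) (i : ℕ) :
    permNat (φ * ψ) i = permNat φ (permNat ψ i) := by
  by_cases h : i < n
  · have h2 : permNat ψ i < n := permNat_lt ψ h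
    simp [permNat, h, Equiv.Perm.mul_apply]
  · simp only [permNat, dif_neg h]

lemma permNat_one {n : ℕ} (i : ℕ) : permNat (1 : Equiv.Perm (Fin n)) i = i := by
  by_cases h : i < n <;> simp [permNat, h]

lemma eval_congr {G : Type*} [Mul G] (A : Brack) (a b : ℕ → G) (k : ℕ)
    (h : ∀ i, k ≤ i → i < k + A.leaves → a i = b i) : A.eval a k = A.eval b k := by
  induction A generalizing k with
  | leaf => exact h k le_rfl (by simp [Brack.leaves])
  | node l r ihl ihr =>
      simp only [Brack.eval]
      rw [ihl _ (fun i h1 h2 => h i h1 (by simp [Brack.leaves]; omega)),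
        ihr _ (fun i h1 h2 => h i (by omega) (by simp [Brack.leaves] at h2 ⊢; omega))]

def labs : FreeMagma ℕ → List ℕ
  | .of i => [i]
  | .mul x y => labs x ++ labs y

lemma labs_mul (x y : FM) : labs (x * y) = labs x ++ labs y := rfl

lemma labs_len_pos : ∀ u : FM, 1 ≤ (labs u).length
  | .of _ => le_rfl
  | .mul x y => by
      have := labs_len_pos x; simp only [labs, List.length_append]; omega

lemma labs_singleton {u : FM} {x : ℕ} (h : labs u = [x]) : u = .of x := by
  cases u with
  | of i => simp only [labs, List.cons.injEq] at h; rw [h.1]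
  | mul a b =>
      have ha := labs_len_pos a; have hb := labs_len_pos b
      have : (labs (FreeMagma.mul a b)).length = 1 := by rw [h]; rfl
      simp only [labs, List.length_append] at this; omega

lemma labs_eval_len (A : Brack) (θ : ℕ → FM) (k : ℕ) :
    (labs (A.eval θ k)).length = ∑ i ∈ Finset.range A.leaves, (labs (θ (k + i))).length := by
  induction A generalizing k with
  | leaf => simp [Brack.eval, Brack.leaves]
  | node l r ihl ihr =>
      simp only [Brack.eval, Brack.leaves, labs_mul, List.length_append, ihl, ihr,
        Finset.sum_range_add]
      congr 1
      exact Finset.sum_congr rfl fun i _ => by rw [Nat.add_assoc]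

lemma labs_lin_len (A : Brack) (σ : ℕ → ℕ) (k : ℕ) :
    (labs (A.eval (fun i => FreeMagma.of (σ i)) k)).length = A.leaves := by
  rw [labs_eval_len]; simp [labs]

/-- decoding linear terms -/
lemma decode (A : Brack) : ∀ (B : Brack) (σ τ : ℕ → ℕ) (k m : ℕ),
    A.eval (fun i => (FreeMagma.of (σ i) : FM)) k = B.eval (fun i => FreeMagma.of (τ i)) m →
    A = B ∧ ∀ i < A.leaves, σ (k + i) = τ (m + i) := by
  induction A with
  | leaf =>
      intro B σ τ k m h
      cases B with
      | leaf =>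
          simp only [Brack.eval] at h; injection h with h
          refine ⟨rfl, fun i hi => ?_⟩
          have : i = 0 := by simpa [Brack.leaves] using hi
          simpa [this] using h
      | node l r =>
          rw [show Brack.eval (.node l r) (fun i => (FreeMagma.of (τ i) : FM)) m
              = FreeMagma.mul (l.eval _ m) (r.eval _ (m + l.leaves)) from rfl] at h
          exact absurd h (by simp [Brack.eval])
  | node l r ihl ihr =>
      intro B σ τ k m h
      cases B with
      | leaf =>
          rw [show Brack.eval (.node l r) (fun i => (FreeMagma.of (σ i) : FM)) k
              = FreeMagma.mul (l.eval _ k) (r.eval _ (k + l.leaves)) from rfl] at h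
          exact absurd h (by simp [Brack.eval])
      | node l' r' =>
          simp only [Brack.eval] at h
          rw [show ∀ x y : FM, x * y = .mul x y from fun _ _ => rfl,
            show ∀ x y : FM, x * y = .mul x y from fun _ _ => rfl] at h
          injection h with h1 h2
          obtain ⟨hll, hσl⟩ := ihl l' σ τ k m h1
          have hlv : l.leaves = l'.leaves := by rw [hll]
          rw [hlv] at h2
          obtain ⟨hrr, hσr⟩ := ihr r' σ τ (k + l'.leaves) (m + l'.leaves) h2
          refine ⟨by rw [hll, hrr], fun i hi => ?_⟩
          simp only [Brack.leaves] at hi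
          by_cases hil : i < l.leaves
          · exact hσl i hil
          · have hj : i - l.leaves < r.leaves := by omega
            have := hσr (i - l.leaves) hj
            have e1 : k + l'.leaves + (i - l.leaves) = k + i := by omega
            have e2 : m + l'.leaves + (i - l.leaves) = m + i := by omega
            rwa [e1, e2] at this


section StepSec

variable (n : ℕ) (s t : Brack) (f : Equiv.Perm (Fin n))

/-- One rewriting step of the identity ⟨s,t,f⟩ inside a free-magma term. -/
inductive Step : FM → FM → Prop
  | base (θ : ℕ → FM) : Step (s.eval θ 0) (t.eval (fun i => θ (permNat f i)) 0)
  | left {u v : FM} (w : FM) : Step u v → Step (u * w) (v * w)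
  | right {u v : FM} (w : FM) : Step u v → Step (w * u) (w * v)

variable {n s t f}

lemma step_len (hs : s.leaves = n) (ht : t.leaves = n) {u v : FM} (h : Step n s t f u v) :
    (labs u).length = (labs v).length := by
  induction h with
  | base θ =>
      rw [labs_eval_len, labs_eval_len, hs, ht]
      simp only [Nat.zero_add]
      rw [Finset.sum_range, Finset.sum_range]
      have : ∀ i : Fin n, (labs (θ (permNat f ↑i))).length = (labs (θ ↑(f i))).length := by
        intro i; congr 2; simp [permNat, i.isLt]
      rw [Finset.sum_congr rfl fun i _ => this i]
      exact (Equiv.sum_comp f fun j : Fin n => (labs (θ ↑j)).length).symm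
  | left w _ ih => simp only [labs_mul, List.length_append, ih]
  | right w _ ih => simp only [labs_mul, List.length_append, ih]

lemma step_lb (hs : s.leaves = n) {u v : FM} (h : Step n s t f u v) : n ≤ (labs u).length := by
  induction h with
  | base θ =>
      rw [labs_eval_len, hs]
      have := Finset.card_nsmul_le_sum (Finset.range n)
        (fun i => (labs (θ (0 + i))).length) 1 (fun x _ => labs_len_pos _)
      simpa using this
  | left w _ ih => simp only [labs_mul, List.length_append]; omega
  | right w _ ih => simp only [labs_mul, List.length_append]; omega

lemma sum_all_one {m : ℕ} (c : ℕ → ℕ) (h1 : ∀ i ∈ Finset.range m, 1 ≤ c i)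
    (h : ∑ i ∈ Finset.range m, c i = m) : ∀ i ∈ Finset.range m, c i = 1 := by
  intro i hi
  by_contra hne
  have h2 : ∀ j ∈ Finset.range m, (fun _ => 1) j ≤ c j := h1
  have h3 : ∃ j ∈ Finset.range m, (1 : ℕ) < c j := ⟨i, hi, by have := h1 i hi; omega⟩
  have := Finset.sum_lt_sum h2 h3
  simp only [Finset.sum_const, Finset.card_range, smul_eq_mul, mul_one] at this
  omega

lemma step_linear (hs : s.leaves = n) (ht : t.leaves = n) {u v : FM} (h : Step n s t f u v) (hlen : (labs u).length = n) :
    ∃ σ : ℕ → ℕ, u = s.eval (fun i => FreeMagma.of (σ i)) 0 ∧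
      v = t.eval (fun i => FreeMagma.of (σ (permNat f i))) 0 := by
  induction h with
  | base θ =>
      rw [labs_eval_len, hs] at hlen
      simp only [Nat.zero_add] at hlen
      have hone : ∀ i ∈ Finset.range n, (labs (θ i)).length = 1 :=
        sum_all_one _ (fun i _ => labs_len_pos _) hlen
      refine ⟨fun i => (labs (θ i)).headI, ?_, ?_⟩
      · apply eval_congr
        intro i h1 h2
        rw [hs] at h2
        obtain ⟨x, hx⟩ := List.length_eq_one_iff.mp (hone i (Finset.mem_range.mpr (by omega)))
        simp [labs_singleton hx, hx, labs]
      · apply eval_congr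
        intro i h1 h2
        rw [ht] at h2
        have hpi : permNat f i < n := permNat_lt f (by omega)
        obtain ⟨x, hx⟩ := List.length_eq_one_iff.mp (hone _ (Finset.mem_range.mpr hpi))
        simp [labs_singleton hx, hx, labs]
  | left w hst ih =>
      exfalso
      have := step_lb hs hst
      simp only [labs_mul, List.length_append] at hlen
      have := labs_len_pos w
      omega
  | right w hst ih =>
      exfalso
      have := step_lb hs hst
      simp only [labs_mul, List.length_append] at hlen
      have := labs_len_pos w
      omega

/-- The invariant propagation lemma. -/
lemma gen (hs : s.leaves = n) (ht : t.leaves = n) (SC : FM → FM → Prop) (hrefl : ∀ u, SC u u)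
    (hsymm : ∀ {u v}, SC u v → SC v u)
    (htrans : ∀ {u v w}, SC u v → SC v w → SC u w)
    (hbase : ∀ σ : ℕ → ℕ, SC (s.eval (fun i => FreeMagma.of (σ i)) 0)
      (t.eval (fun i => FreeMagma.of (σ (permNat f i))) 0))
    {u v : FM} (h : Relation.EqvGen (Step n s t f) u v) :
    ((labs u).length = n ↔ (labs v).length = n) ∧ ((labs u).length = n → SC u v) := by
  induction h with
  | rel u v hst =>
      refine ⟨by rw [step_len hs ht hst], fun hlen => ?_⟩
      obtain ⟨σ, hu, hv⟩ := step_linear hs ht hst hlen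
      rw [hu, hv]; exact hbase σ
  | refl u => exact ⟨Iff.rfl, fun _ => hrefl u⟩
  | symm u v h ih => exact ⟨ih.1.symm, fun hv => hsymm (ih.2 (ih.1.mpr hv))⟩
  | trans u v w h1 h2 ih1 ih2 =>
      exact ⟨ih1.1.trans ih2.1, fun hu => htrans (ih1.2 hu) (ih2.2 (ih1.1.mp hu))⟩

lemma eqv_mul {a b c d : FM} (hab : Relation.EqvGen (Step n s t f) a b)
    (hcd : Relation.EqvGen (Step n s t f) c d) :
    Relation.EqvGen (Step n s t f) (a * c) (b * d) := by
  have hl : ∀ {x y : FM} (w : FM), Relation.EqvGen (Step n s t f) x y →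
      Relation.EqvGen (Step n s t f) (x * w) (y * w) := by
    intro x y w h
    induction h with
    | rel u v hst => exact Relation.EqvGen.rel _ _ (Step.left w hst)
    | refl u => exact Relation.EqvGen.refl _
    | symm u v _ ih => exact Relation.EqvGen.symm _ _ ih
    | trans u v z _ _ ih1 ih2 => exact Relation.EqvGen.trans _ _ _ ih1 ih2
  have hr : ∀ {x y : FM} (w : FM), Relation.EqvGen (Step n s t f) x y →
      Relation.EqvGen (Step n s t f) (w * x) (w * y) := by
    intro x y w h
    induction h with
    | rel u v hst => exact Relation.EqvGen.rel _ _ (Step.right w hst)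
    | refl u => exact Relation.EqvGen.refl _
    | symm u v _ ih => exact Relation.EqvGen.symm _ _ ih
    | trans u v z _ _ ih1 ih2 => exact Relation.EqvGen.trans _ _ _ ih1 ih2
  exact Relation.EqvGen.trans _ _ _ (hl c hab) (hr b hcd)

end StepSec

/-- the setoid -/
def sa (n : ℕ) (s t : Brack) (f : Equiv.Perm (Fin n)) : Setoid FM :=
  ⟨Relation.EqvGen (Step n s t f), Relation.EqvGen.is_equivalence _⟩

/-- the relatively free magma on the identity ⟨s,t,f⟩ -/
abbrev MM (n : ℕ) (s t : Brack) (f : Equiv.Perm (Fin n)) : Type := Quotient (sa n s t f)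

instance (n : ℕ) (s t : Brack) (f : Equiv.Perm (Fin n)) : Mul (MM n s t f) :=
  ⟨Quotient.map₂ (· * ·) (fun _ _ hab _ _ hcd => eqv_mul hab hcd)⟩

lemma mk_mul (n : ℕ) (s t : Brack) (f : Equiv.Perm (Fin n)) (a c : FM) :
    (Quotient.mk (sa n s t f) a) * (Quotient.mk (sa n s t f) c)
      = Quotient.mk (sa n s t f) (a * c) := rfl

lemma eval_mk (n : ℕ) (s t : Brack) (f : Equiv.Perm (Fin n)) (A : Brack) (θ : ℕ → FM) (k : ℕ) :
    A.eval (fun i => Quotient.mk (sa n s t f) (θ i)) k = Quotient.mk (sa n s t f) (A.eval θ k) := by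
  induction A generalizing k with
  | leaf => rfl
  | node l r ihl ihr => simp only [Brack.eval, ihl, ihr, mk_mul]

lemma sat_MM (n : ℕ) (s t : Brack) (f : Equiv.Perm (Fin n)) : Satisfies (MM n s t f) s t f := by
  intro a
  have ha : a = fun i => Quotient.mk (sa n s t f) (a i).out :=
    funext fun i => ((Quotient.out_eq (a i))).symm
  rw [ha]
  rw [eval_mk, eval_mk]
  exact Quotient.sound (Relation.EqvGen.rel _ _ (Step.base (fun i => (a i).out)))

lemma eval_down {X : Type} [Mul X] (A : Brack) (a : ℕ → ULift.{w} X) (k : ℕ) :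
    (A.eval a k).down = A.eval (fun i => (a i).down) k := by
  induction A generalizing k with
  | leaf => rfl
  | node l r ihl ihr =>
      simp only [Brack.eval]
      rw [show (l.eval a k * r.eval a (k + l.leaves)).down
          = (l.eval a k).down * (r.eval a (k + l.leaves)).down from rfl, ihl, ihr]

lemma sat_ulift {X : Type} [Mul X] {n : ℕ} (A B : Brack) (φ : Equiv.Perm (Fin n)) :
    Satisfies (ULift.{w} X) A B φ ↔ Satisfies X A B φ := by
  constructor
  · intro h a
    have := congrArg ULift.down (h (fun i => ULift.up (a i)))
    rwa [eval_down, eval_down] at this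
  · intro h a
    have hd := h (fun i => (a i).down)
    have : (A.eval a 0).down = (B.eval (fun i => a (permNat φ i)) 0).down := by
      rw [eval_down, eval_down]; exact hd
    have h1 : ULift.up (A.eval a 0).down = A.eval a 0 := rfl
    have h2 : ULift.up (B.eval (fun i => a (permNat φ i)) 0).down
        = B.eval (fun i => a (permNat φ i)) 0 := rfl
    rw [← h1, ← h2, this]

lemma perm_apply_val {n : ℕ} (φ : Equiv.Perm (Fin n)) {i : ℕ} (h : i < n) :
    ((φ ⟨i, h⟩ : Fin n) : ℕ) = permNat φ i := by simp [permNat, h]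

lemma perm_ext {n : ℕ} {φ ψ : Equiv.Perm (Fin n)}
    (h : ∀ i < n, permNat φ i = permNat ψ i) : φ = ψ := by
  apply Equiv.ext
  intro x
  apply Fin.ext
  have := h x.1 x.2
  rwa [← perm_apply_val φ x.2, ← perm_apply_val ψ x.2] at this

lemma perm_eq_one {n : ℕ} {φ : Equiv.Perm (Fin n)}
    (h : ∀ i < n, permNat φ i = i) : φ = 1 :=
  perm_ext fun i hi => by rw [h i hi, permNat_one]

/-- linear term with shape `A` and labels `σ` -/
def lin (A : Brack) (σ : ℕ → ℕ) : FM := A.eval (fun i => FreeMagma.of (σ i)) 0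

section SCs

variable {n : ℕ} {s t : Brack} {f : Equiv.Perm (Fin n)}

/-- the class invariant in the case `s ≠ t` -/
def SC1 (n : ℕ) (s t : Brack) (f : Equiv.Perm (Fin n)) (u v : FM) : Prop :=
  u = v ∨ (∃ σ : ℕ → ℕ, u = lin s σ ∧ v = lin t fun i => σ (permNat f i))
    ∨ (∃ σ : ℕ → ℕ, v = lin s σ ∧ u = lin t fun i => σ (permNat f i))

lemma sc1_symm {u v : FM} (h : SC1 n s t f u v) : SC1 n s t f v u := by
  rcases h with h | h | h
  · exact Or.inl h.symm
  · exact Or.inr (Or.inr h)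
  · exact Or.inr (Or.inl h)

lemma pf_pfinv {n : ℕ} (f : Equiv.Perm (Fin n)) {j : ℕ} (hj : j < n) :
    permNat f (permNat f⁻¹ j) = j := by
  rw [← permNat_mul, mul_inv_cancel, permNat_one]

lemma sc1_trans (hs : s.leaves = n) (ht : t.leaves = n) (hst : s ≠ t) {u v w : FM}
    (h1 : SC1 n s t f u v) (h2 : SC1 n s t f v w) : SC1 n s t f u w := by
  rcases h1 with h1 | ⟨σ, hu, hv⟩ | ⟨σ, hv, hu⟩
  · rwa [h1]
  · rcases h2 with h2 | ⟨τ, hv2, hw⟩ | ⟨τ, hw, hv2⟩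
    · rw [← h2]; exact Or.inr (Or.inl ⟨σ, hu, hv⟩)
    · exact absurd (decode t s _ _ 0 0 (hv.symm.trans hv2)).1 (Ne.symm hst)
    · -- v = lin t (σ∘pf) = lin t (τ∘pf) : σ = τ on [0,n)
      have hd := decode t t _ _ 0 0 (hv.symm.trans hv2)
      have hag : ∀ j < n, σ j = τ j := by
        intro j hj
        have hi : permNat f⁻¹ j < n := permNat_lt _ hj
        have := hd.2 (permNat f⁻¹ j) (by rw [ht]; exact hi)
        simpa [pf_pfinv f hj] using this
      refine Or.inl ?_
      rw [hu, hw]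
      exact eval_congr s _ _ 0 fun i hi1 hi2 => by
        show FreeMagma.of (σ i) = FreeMagma.of (τ i)
        rw [hag i (by rw [hs] at hi2; omega)]
  · rcases h2 with h2 | ⟨τ, hv2, hw⟩ | ⟨τ, hw, hv2⟩
    · rw [← h2]; exact Or.inr (Or.inr ⟨σ, hv, hu⟩)
    · -- v = lin s σ and v = lin s τ
      have hd := decode s s _ _ 0 0 (hv.symm.trans hv2)
      refine Or.inl ?_
      rw [hu, hw]
      exact eval_congr t _ _ 0 fun i hi1 hi2 => by
        have hpi : permNat f i < n := permNat_lt f (by rw [ht] at hi2; omega)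
        have := hd.2 (permNat f i) (by rw [hs]; exact hpi)
        simp only [Nat.zero_add] at this
        show FreeMagma.of (σ (permNat f i)) = FreeMagma.of (τ (permNat f i))
        rw [this]
    · exact absurd (decode s t _ _ 0 0 (hv.symm.trans hv2)).1 hst

/-- the class invariant in the case `s = t` -/
def SC2 (n : ℕ) (s : Brack) (f : Equiv.Perm (Fin n)) (u v : FM) : Prop :=
  u = v ∨ ∃ (σ : ℕ → ℕ) (k : ℕ), u = lin s σ ∧ v = lin s fun i => σ (permNat (f ^ k) i)

lemma sc2_symm {u v : FM} (h : SC2 n s f u v) : SC2 n s f v u := by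
  rcases h with h | ⟨σ, k, hu, hv⟩
  · exact Or.inl h.symm
  · have hmpos : 0 < orderOf f := orderOf_pos f
    have hpow : f ^ k * f ^ (k * (orderOf f - 1)) = 1 := by
      rw [← pow_add]
      have he : k + k * (orderOf f - 1) = orderOf f * k := by
        obtain ⟨m', hm'⟩ : ∃ m', orderOf f = m' + 1 := ⟨orderOf f - 1, by omega⟩
        rw [hm']; simp only [Nat.add_sub_cancel]; ring
      rw [he, pow_mul, pow_orderOf_eq_one, one_pow]
    refine Or.inr ⟨fun i => σ (permNat (f ^ k) i), k * (orderOf f - 1), hv, ?_⟩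
    rw [hu]
    have : (fun i => σ (permNat (f ^ k) (permNat (f ^ (k * (orderOf f - 1))) i))) = σ := by
      funext i
      rw [← permNat_mul, hpow, permNat_one]
    rw [this]

lemma sc2_trans (hs : s.leaves = n) {u v w : FM}
    (h1 : SC2 n s f u v) (h2 : SC2 n s f v w) : SC2 n s f u w := by
  rcases h1 with h1 | ⟨σ, k, hu, hv⟩
  · rwa [h1]
  · rcases h2 with h2 | ⟨τ, j, hv2, hw⟩
    · rw [← h2]; exact Or.inr ⟨σ, k, hu, hv⟩
    · have hd := decode s s _ _ 0 0 (hv.symm.trans hv2)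
      refine Or.inr ⟨σ, k + j, hu, ?_⟩
      rw [hw]
      exact eval_congr s _ _ 0 fun i hi1 hi2 => by
        have hji : permNat (f ^ j) i < n := permNat_lt _ (by rw [hs] at hi2; omega)
        have := hd.2 (permNat (f ^ j) i) (by rw [hs]; exact hji)
        simp only [Nat.zero_add] at this
        show FreeMagma.of (τ (permNat (f ^ j) i)) = FreeMagma.of (σ (permNat (f ^ (k + j)) i))
        rw [← this, ← permNat_mul, ← pow_add]

end SCs

/-- applying an identity repeatedly -/
lemma sat_pow {G : Type*} [Mul G] {n : ℕ} (s : Brack) (f : Equiv.Perm (Fin n))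
    (h : Satisfies G s s f) : ∀ m : ℕ, Satisfies G s s (f ^ m)
  | 0 => by
      intro a
      simp only [pow_zero]
      have he : (fun i => a (permNat (1 : Equiv.Perm (Fin n)) i)) = a :=
        funext fun i => by rw [permNat_one]
      rw [he]
  | (m + 1) => by
      intro a
      have h1 := sat_pow s f h m a
      have h2 := h (fun i => a (permNat (f ^ m) i))
      rw [h1, h2]
      congr 1
      funext i
      show a (permNat (f ^ m) (permNat f i)) = a (permNat (f ^ (m + 1)) i)
      rw [← permNat_mul, ← pow_succ]

end Stmt4Aux

open Stmt4Aux

/-- Theorem 4.1: for distinct nontrivial linear identities `I = ⟨s,t,f⟩`, `J = ⟨s',t',g⟩`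
of the same length `2n`, `n ≥ 3`, `I` implies `J` iff `s = t = s' = t'` and `g = f^k`
for some `k ≥ 1`. -/
theorem stmt4.{w} (n : ℕ) (hn : 3 ≤ n)
    (s t : Brack) (hs : s.leaves = n) (ht : t.leaves = n) (f : Equiv.Perm (Fin n))
    (s' t' : Brack) (hs' : s'.leaves = n) (ht' : t'.leaves = n) (g : Equiv.Perm (Fin n))
    (hI : ¬(s = t ∧ f = 1)) (hJ : ¬(s' = t' ∧ g = 1))
    (hd1 : (s, t, f) ≠ (s', t', g)) (hd2 : (s, t, f) ≠ (t', s', g⁻¹)) :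
    (∀ (G : Type w) [Mul G], Satisfies G s t f → Satisfies G s' t' g) ↔
      (s = t ∧ s' = s ∧ t' = s ∧ ∃ k : ℕ, 1 ≤ k ∧ g = f ^ k) := by
  constructor
  · intro H
    have hsatM : Satisfies (ULift.{w} (MM n s t f)) s t f :=
      (sat_ulift s t f).mpr (sat_MM n s t f)
    have hJsat : Satisfies (MM n s t f) s' t' g :=
      (sat_ulift s' t' g).mp (H (ULift.{w} (MM n s t f)) hsatM)
    have key := hJsat (fun i => Quotient.mk (sa n s t f) (FreeMagma.of i))
    have key' : Quotient.mk (sa n s t f) (s'.eval (fun i => FreeMagma.of i) 0)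
        = Quotient.mk (sa n s t f) (t'.eval (fun i => FreeMagma.of (permNat g i)) 0) := by
      rw [← eval_mk n s t f s' (fun i => FreeMagma.of i) 0,
        ← eval_mk n s t f t' (fun i => FreeMagma.of (permNat g i)) 0]
      exact key
    have hrel : Relation.EqvGen (Step n s t f) (s'.eval (fun i => FreeMagma.of i) 0)
        (t'.eval (fun i => FreeMagma.of (permNat g i)) 0) := Quotient.exact key'
    have hlen : (labs (s'.eval (fun i => FreeMagma.of i) 0)).length = n := by
      have := labs_lin_len s' (fun i => i) 0
      rw [hs'] at this
      exact this
    by_cases hst : s = t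
    · subst hst
      have hmain := (gen hs hs (SC2 n s f) (fun u => Or.inl rfl) sc2_symm (sc2_trans hs)
          (fun σ => Or.inr ⟨σ, 1, rfl, by rw [pow_one]; rfl⟩) hrel).2 hlen
      rcases hmain with heq | ⟨σ, k, h1, h2⟩
      · obtain ⟨hs't', hids⟩ := decode s' t' (fun i => i) (permNat g) 0 0 heq
        have hg1 : g = 1 := perm_eq_one fun i hi => by
          have := hids i (by rw [hs']; exact hi)
          simpa using this.symm
        exact absurd ⟨hs't', hg1⟩ hJ
      · obtain ⟨hs's, hid⟩ := decode s' s (fun i => i) σ 0 0 h1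
        obtain ⟨ht's, hgd⟩ := decode t' s (permNat g) (fun i => σ (permNat (f ^ k) i)) 0 0 h2
        have hgfk : g = f ^ k := perm_ext fun i hi => by
          have h3 := hgd i (by rw [ht']; exact hi)
          simp only [Nat.zero_add] at h3
          have h4 := hid (permNat (f ^ k) i) (by rw [hs']; exact permNat_lt _ hi)
          simp only [Nat.zero_add] at h4
          rw [h3, ← h4]
        have hk0 : k ≠ 0 := by
          intro hk
          rw [hk, pow_zero] at hgfk
          exact hJ ⟨hs's.trans ht's.symm, hgfk⟩
        exact ⟨rfl, hs's, ht's, k, by omega, hgfk⟩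
    · exfalso
      have hmain := (gen hs ht (SC1 n s t f) (fun u => Or.inl rfl) sc1_symm (sc1_trans hs ht hst)
          (fun σ => Or.inr (Or.inl ⟨σ, rfl, rfl⟩)) hrel).2 hlen
      rcases hmain with heq | ⟨σ, h1, h2⟩ | ⟨σ, h1, h2⟩
      · obtain ⟨hs't', hids⟩ := decode s' t' (fun i => i) (permNat g) 0 0 heq
        have hg1 : g = 1 := perm_eq_one fun i hi => by
          have := hids i (by rw [hs']; exact hi)
          simpa using this.symm
        exact hJ ⟨hs't', hg1⟩
      · obtain ⟨hs1, hid⟩ := decode s' s (fun i => i) σ 0 0 h1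
        obtain ⟨ht1, hgd⟩ := decode t' t (permNat g) (fun i => σ (permNat f i)) 0 0 h2
        have hgf : g = f := perm_ext fun i hi => by
          have h3 := hgd i (by rw [ht']; exact hi)
          simp only [Nat.zero_add] at h3
          have h4 := hid (permNat f i) (by rw [hs']; exact permNat_lt f hi)
          simp only [Nat.zero_add] at h4
          rw [h3, ← h4]
        exact hd1 (by rw [hs1, ht1, hgf])
      · obtain ⟨ht1, hgd⟩ := decode t' s (permNat g) σ 0 0 h1
        obtain ⟨hs1, hid⟩ := decode s' t (fun i => i) (fun i => σ (permNat f i)) 0 0 h2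
        have hfg : g * f = 1 := by
          apply Equiv.ext
          intro x
          rw [Equiv.Perm.mul_apply, Equiv.Perm.one_apply]
          apply Fin.ext
          have e1 : ((g (f x) : Fin n) : ℕ) = permNat g ((f x : Fin n) : ℕ) :=
            perm_apply_val g (f x).2
          have e2 := hgd ((f x : Fin n) : ℕ) (by rw [ht']; exact (f x).2)
          simp only [Nat.zero_add] at e2
          have e3 : ((f x : Fin n) : ℕ) = permNat f (x : ℕ) := perm_apply_val f x.2
          have e4 := hid (x : ℕ) (by rw [hs']; exact x.2)
          simp only [Nat.zero_add] at e4
          rw [e1, e2, e3, ← e4]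
        have hfinv : f = g⁻¹ := (inv_eq_of_mul_eq_one_right hfg).symm
        exact hd2 (by rw [ht1, hs1, hfinv])
  · rintro ⟨hst, hs's, ht's, k, hk, hgk⟩ G _ hSat
    subst hgk
    subst hs's
    subst ht's
    subst hst
    exact sat_pow _ f hSat k
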